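/- arXiv:2604.03909 — 2 statements merged into one kernel-verified Lean document; each statement's English description precedes it below -/
import Mathlib

section
/- Duality principle (Theorem 1): let y solve the backward difference equation with control u ∈ 𝒰 and terminal condition y_T = f ∈ ℝ^d, and define the estimator S_T := y_0^⊤ μ_0 − Σ_{t=0}^{T-1} u_t^⊤ Z_t. Then the dual optimal control cost equals the mean-squared prediction error: J_T(u; f) = E[ ½ | f^⊤ X_T − S_T |² ]. -/
open Matrix Finset MeasureTheory ProbabilityTheory

private lemma l2_mul_integrable {Ω : Type*} [MeasurableSpace Ω] {μ : Measure Ω}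
    {f g : Ω → ℝ} (hf : MemLp f 2 μ) (hg : MemLp g 2 μ) :
    Integrable (fun ω => f ω * g ω) μ := by
  have h := ((hf.add hg).integrable_sq.sub hf.integrable_sq).sub hg.integrable_sq
  have heq : (fun ω => f ω * g ω) = fun ω => (((f ω + g ω) ^ 2 - f ω ^ 2) - g ω ^ 2) / 2 := by
    funext ω; ring
  rw [heq]
  exact h.div_const 2

private lemma transpose_mulVec_dot {d m : ℕ} (M : Matrix (Fin m) (Fin d) ℝ)
    (v : Fin m → ℝ) (w : Fin d → ℝ) :
    Mᵀ.mulVec v ⬝ᵥ w = v ⬝ᵥ M.mulVec w := by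
  rw [Matrix.mulVec_transpose, ← Matrix.dotProduct_mulVec]

private lemma dot_sum_right {d : ℕ} {S : Finset ℕ} (v : Fin d → ℝ) (g : ℕ → Fin d → ℝ) :
    v ⬝ᵥ (∑ s ∈ S, g s) = ∑ s ∈ S, v ⬝ᵥ g s := by
  simp only [dotProduct, Finset.sum_apply, Finset.mul_sum]
  exact Finset.sum_comm

private lemma sum_dot_left {d : ℕ} {S : Finset ℕ} (g : ℕ → Fin d → ℝ) (w : Fin d → ℝ) :
    (∑ s ∈ S, g s) ⬝ᵥ w = ∑ s ∈ S, g s ⬝ᵥ w := by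
  simp only [dotProduct, Finset.sum_apply, Finset.sum_mul]
  exact Finset.sum_comm

private lemma sum_Icc_one {M : Type*} [AddCommMonoid M] (T : ℕ) (g : ℕ → M) :
    ∑ t ∈ Finset.Icc 1 T, g t = ∑ t ∈ Finset.range T, g (t + 1) := by
  rw [← Finset.Ico_add_one_right_eq_Icc, Finset.sum_Ico_eq_sum_range]
  have h : T + 1 - 1 = T := by omega
  rw [h]
  exact Finset.sum_congr rfl fun i _ => by rw [Nat.add_comm]

private lemma memL2_dot {Ω : Type*} [MeasurableSpace Ω] {μ : Measure Ω} {n : ℕ}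
    (v : Fin n → ℝ) {g : Fin n → Ω → ℝ} (hg : ∀ k, MemLp (g k) 2 μ) :
    MemLp (fun ω => ∑ k, v k * g k ω) 2 μ :=
  memLp_finset_sum _ (fun k _ => (hg k).const_mul _)

private lemma dot_integral_zero {Ω : Type*} [MeasurableSpace Ω] (μ : Measure Ω)
    [IsProbabilityMeasure μ] {n : ℕ} (v : Fin n → ℝ) (g : Fin n → Ω → ℝ)
    (hg : ∀ k, MemLp (g k) 2 μ) (hmean : ∀ k, (∫ ω, g k ω ∂μ) = 0) :
    (∫ ω, ∑ k, v k * g k ω ∂μ) = 0 := by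
  rw [integral_finset_sum _ (fun k _ => ((hg k).integrable one_le_two).const_mul _)]
  simp [integral_const_mul, hmean]

private lemma quad_integral {Ω : Type*} [MeasurableSpace Ω] (μ : Measure Ω)
    {n : ℕ} (v : Fin n → ℝ) (g : Fin n → Ω → ℝ) (hg : ∀ k, MemLp (g k) 2 μ)
    (M : Matrix (Fin n) (Fin n) ℝ)
    (hcov : ∀ k l, (∫ ω, g k ω * g l ω ∂μ) = M k l) :
    (∫ ω, (∑ k, v k * g k ω) * (∑ l, v l * g l ω) ∂μ) = v ⬝ᵥ M.mulVec v := by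
  have h1 : ∀ ω, (∑ k, v k * g k ω) * (∑ l, v l * g l ω)
      = ∑ k, ∑ l, (v k * v l) * (g k ω * g l ω) := by
    intro ω
    rw [Finset.sum_mul_sum]
    exact Finset.sum_congr rfl fun k _ => Finset.sum_congr rfl fun l _ => by ring
  simp_rw [h1]
  rw [integral_finset_sum _ (fun k _ => integrable_finset_sum _
    (fun l _ => (l2_mul_integrable (hg k) (hg l)).const_mul _))]
  have h2 : ∀ k, (∫ ω, ∑ l, (v k * v l) * (g k ω * g l ω) ∂μ)
      = ∑ l, (v k * v l) * M k l := by
    intro k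
    rw [integral_finset_sum _ (fun l _ => (l2_mul_integrable (hg k) (hg l)).const_mul _)]
    exact Finset.sum_congr rfl fun l _ => by rw [integral_const_mul, hcov]
  rw [Finset.sum_congr rfl fun k _ => h2 k]
  simp only [dotProduct, Matrix.mulVec, Finset.mul_sum]
  exact Finset.sum_congr rfl fun k _ => Finset.sum_congr rfl fun l _ => by ring


/-- The backward difference equation (dual control system): `y_T = f` and
`y_t = ∑_{s=1}^{T-t} A_{t+s,s}ᵀ y_{t+s} + C_tᵀ u_t` for every `0 ≤ t ≤ T-1`. -/
def IsDualSol (T d m : ℕ) (A : ℕ → ℕ → Matrix (Fin d) (Fin d) ℝ)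
    (C : ℕ → Matrix (Fin m) (Fin d) ℝ) (u : ℕ → Fin m → ℝ) (f : Fin d → ℝ)
    (y : ℕ → Fin d → ℝ) : Prop :=
  y T = f ∧
    ∀ t < T, y t =
      (∑ s ∈ Finset.Icc 1 (T - t), ((A (t + s) s)ᵀ).mulVec (y (t + s)))
        + ((C t)ᵀ).mulVec (u t)

/-- The dual optimal control cost
`J_T(u; f) = ½ y_0ᵀ Σ0 y_0 + ∑_{t=1}^{T} ½ y_tᵀ Q_t y_t + ∑_{t=0}^{T-1} ½ u_tᵀ R_t u_t`,
expressed in terms of the dual-state solution `y` for `(u, f)`. -/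
noncomputable def dualCost (T d m : ℕ) (Sig0 : Matrix (Fin d) (Fin d) ℝ)
    (Q : ℕ → Matrix (Fin d) (Fin d) ℝ) (R : ℕ → Matrix (Fin m) (Fin m) ℝ)
    (y : ℕ → Fin d → ℝ) (u : ℕ → Fin m → ℝ) : ℝ :=
  (1 / 2) * (y 0 ⬝ᵥ Sig0.mulVec (y 0))
    + (∑ t ∈ Finset.Icc 1 T, (1 / 2) * (y t ⬝ᵥ (Q t).mulVec (y t)))
    + ∑ t ∈ Finset.range T, (1 / 2) * (u t ⬝ᵥ (R t).mulVec (u t))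

/-- Values of the family of primitive random vectors `(X_0, B_1, …, B_T, W_0, …, W_{T-1})`. -/
def noiseType (d m : ℕ) {T : ℕ} : Fin (T + 1) ⊕ Fin T → Type :=
  Sum.elim (fun _ => Fin d → ℝ) (fun _ => Fin m → ℝ)

/-- The canonical measurable-space structure on each member of the family. -/
def noiseMS (T d m : ℕ) : (i : Fin (T + 1) ⊕ Fin T) → MeasurableSpace (noiseType d m i)
  | Sum.inl _ => (inferInstance : MeasurableSpace (Fin d → ℝ))
  | Sum.inr _ => (inferInstance : MeasurableSpace (Fin m → ℝ))

/-- The family of primitive random vectors `(X_0, B_1, …, B_T, W_0, …, W_{T-1})`. -/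
def noiseFamily (T d m : ℕ) {Ω : Type*} (X0 : Ω → Fin d → ℝ)
    (B : ℕ → Ω → Fin d → ℝ) (W : ℕ → Ω → Fin m → ℝ) :
    (i : Fin (T + 1) ⊕ Fin T) → Ω → noiseType d m i
  | Sum.inl j => if j.val = 0 then X0 else B j.val
  | Sum.inr t => W t.val

private noncomputable def dualXi (T d m : ℕ) {Ω : Type*} (X0 : Ω → Fin d → ℝ)
    (B : ℕ → Ω → Fin d → ℝ) (W : ℕ → Ω → Fin m → ℝ) (μ0 : Fin d → ℝ)
    (y : ℕ → Fin d → ℝ) (u : ℕ → Fin m → ℝ) : (Fin (T + 1) ⊕ Fin T) → Ω → ℝ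
  | Sum.inl j =>
      if j.val = 0 then (fun ω => y 0 ⬝ᵥ (X0 ω - μ0)) else fun ω => y j.val ⬝ᵥ B j.val ω
  | Sum.inr t => fun ω => u t.val ⬝ᵥ W t.val ω

private noncomputable def dualPhi (T d m : ℕ) (μ0 : Fin d → ℝ) (y : ℕ → Fin d → ℝ)
    (u : ℕ → Fin m → ℝ) : (i : Fin (T + 1) ⊕ Fin T) → noiseType d m i → ℝ
  | Sum.inl j => fun (x : Fin d → ℝ) => if j.val = 0 then y 0 ⬝ᵥ (x - μ0) else y j.val ⬝ᵥ x
  | Sum.inr t => fun (x : Fin m → ℝ) => u t.val ⬝ᵥ x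

private lemma measurable_dot {n : ℕ} (v : Fin n → ℝ) :
    Measurable (fun x : Fin n → ℝ => v ⬝ᵥ x) :=
  Finset.measurable_sum _ fun k _ => (measurable_pi_apply k).const_mul _

private lemma dualPhi_measurable (T d m : ℕ) (μ0 : Fin d → ℝ) (y : ℕ → Fin d → ℝ)
    (u : ℕ → Fin m → ℝ) (i : Fin (T + 1) ⊕ Fin T) :
    @Measurable _ ℝ (noiseMS T d m i) _ (dualPhi T d m μ0 y u i) := by
  match i with
  | Sum.inl j =>
    show @Measurable (Fin d → ℝ) ℝ _ _
      (fun x : Fin d → ℝ => if j.val = 0 then y 0 ⬝ᵥ (x - μ0) else y j.val ⬝ᵥ x)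
    by_cases h0 : j.val = 0
    · simp only [if_pos h0]
      have e : (fun x : Fin d → ℝ => y 0 ⬝ᵥ (x - μ0))
          = fun x : Fin d → ℝ => y 0 ⬝ᵥ x - y 0 ⬝ᵥ μ0 := by
        funext x; rw [dotProduct_sub]
      rw [e]
      exact (measurable_dot (y 0)).sub measurable_const
    · simp only [if_neg h0]
      exact measurable_dot (y j.val)
  | Sum.inr t =>
    show @Measurable (Fin m → ℝ) ℝ _ _ (fun x : Fin m → ℝ => u t.val ⬝ᵥ x)
    exact measurable_dot (u t.val)

/-- Duality principle (Theorem 1): let `y` solve the backward difference equation with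
control `u ∈ 𝒰` and terminal condition `y_T = f ∈ ℝ^d`, and define the estimator
`S_T := y_0ᵀ μ0 − ∑_{t=0}^{T-1} u_tᵀ Z_t`. Then the dual optimal control cost equals
the mean-squared prediction error: `J_T(u; f) = E[ ½ | fᵀ X_T − S_T |² ]`. -/
theorem duality_principle
    (T d m : ℕ) (hT : 1 ≤ T) (hd : 1 ≤ d) (hm : 1 ≤ m)
    {Ω : Type*} [MeasurableSpace Ω] (μ : Measure Ω) [IsProbabilityMeasure μ]
    (A : ℕ → ℕ → Matrix (Fin d) (Fin d) ℝ)
    (C : ℕ → Matrix (Fin m) (Fin d) ℝ)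
    (X B : ℕ → Ω → Fin d → ℝ) (Z W : ℕ → Ω → Fin m → ℝ)
    (μ0 : Fin d → ℝ) (Sig0 : Matrix (Fin d) (Fin d) ℝ)
    (Q : ℕ → Matrix (Fin d) (Fin d) ℝ) (R : ℕ → Matrix (Fin m) (Fin m) ℝ)
    -- measurability and mutual independence of `X_0, B_1, …, B_T, W_0, …, W_{T-1}`
    (hmeas : ∀ i, @Measurable Ω (noiseType d m i) _ (noiseMS T d m i)
      (noiseFamily T d m (X 0) B W i))
    (hindep : iIndepFun (m := noiseMS T d m) (noiseFamily T d m (X 0) B W) μ)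
    -- square integrability (componentwise)
    (hX0L2 : ∀ i, MemLp (fun ω => X 0 ω i) 2 μ)
    (hBL2 : ∀ t, 1 ≤ t → t ≤ T → ∀ i, MemLp (fun ω => B t ω i) 2 μ)
    (hWL2 : ∀ t < T, ∀ j, MemLp (fun ω => W t ω j) 2 μ)
    -- first moments
    (hX0mean : ∀ i, (∫ ω, X 0 ω i ∂μ) = μ0 i)
    (hBmean : ∀ t, 1 ≤ t → t ≤ T → ∀ i, (∫ ω, B t ω i ∂μ) = 0)
    (hWmean : ∀ t < T, ∀ j, (∫ ω, W t ω j ∂μ) = 0)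
    -- covariances
    (hX0cov : ∀ i i', (∫ ω, (X 0 ω i - μ0 i) * (X 0 ω i' - μ0 i') ∂μ) = Sig0 i i')
    (hBcov : ∀ t, 1 ≤ t → t ≤ T → ∀ i i',
      (∫ ω, B t ω i * B t ω i' ∂μ) = Q t i i')
    (hWcov : ∀ t < T, ∀ j j', (∫ ω, W t ω j * W t ω j' ∂μ) = R t j j')
    -- the hidden-state recursion and the observation model
    (hX : ∀ t, 1 ≤ t → t ≤ T → ∀ ω,
      X t ω = (∑ s ∈ Finset.Icc 1 t, (A t s).mulVec (X (t - s) ω)) + B t ω)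
    (hZ : ∀ t < T, ∀ ω, Z t ω = (C t).mulVec (X t ω) + W t ω)
    -- the control, terminal condition, and dual-state solution
    (u : ℕ → Fin m → ℝ) (f : Fin d → ℝ) (y : ℕ → Fin d → ℝ)
    (hy : IsDualSol T d m A C u f y) :
    dualCost T d m Sig0 Q R y u
      = ∫ ω, (1 / 2) * (f ⬝ᵥ X T ω
          - (y 0 ⬝ᵥ μ0 - ∑ t ∈ Finset.range T, u t ⬝ᵥ Z t ω)) ^ 2 ∂μ := by
  classical
  obtain ⟨hyT, hyrec⟩ := hy
  set ξ := dualXi T d m (X 0) B W μ0 y u with hξdef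
  -- Step 1: pointwise identity
  have key : ∀ ω, f ⬝ᵥ X T ω - (y 0 ⬝ᵥ μ0 - ∑ t ∈ Finset.range T, u t ⬝ᵥ Z t ω)
      = ∑ i : Fin (T + 1) ⊕ Fin T, ξ i ω := by
    intro ω
    have hdouble :
        ∑ t ∈ Finset.Icc 1 T, ∑ s ∈ Finset.Icc 1 t, (y t ⬝ᵥ (A t s).mulVec (X (t - s) ω))
        = ∑ t ∈ Finset.range T, ∑ s ∈ Finset.Icc 1 (T - t),
            (y (t + s) ⬝ᵥ (A (t + s) s).mulVec (X t ω)) := by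
      rw [Finset.sum_sigma', Finset.sum_sigma']
      refine Finset.sum_nbij' (fun p => ⟨p.1 - p.2, p.2⟩) (fun p => ⟨p.1 + p.2, p.2⟩)
        ?_ ?_ ?_ ?_ ?_
      · rintro ⟨a, b⟩ hab
        simp only [Finset.mem_sigma, Finset.mem_Icc, Finset.mem_range] at hab ⊢
        omega
      · rintro ⟨a, b⟩ hab
        simp only [Finset.mem_sigma, Finset.mem_Icc, Finset.mem_range] at hab ⊢
        omega
      · rintro ⟨a, b⟩ hab
        simp only [Finset.mem_sigma, Finset.mem_Icc] at hab
        have h : a - b + b = a := by omega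
        simp [h]
      · rintro ⟨a, b⟩ hab
        simp only [Finset.mem_sigma, Finset.mem_Icc, Finset.mem_range] at hab
        have h : a + b - b = a := by omega
        simp [h]
      · rintro ⟨a, b⟩ hab
        simp only [Finset.mem_sigma, Finset.mem_Icc] at hab
        have hab' : a - b + b = a := by omega
        simp only [hab']
    have hE1 : ∑ t ∈ Finset.Icc 1 T, (y t ⬝ᵥ X t ω)
        = (∑ t ∈ Finset.Icc 1 T, ∑ s ∈ Finset.Icc 1 t, (y t ⬝ᵥ (A t s).mulVec (X (t - s) ω)))
          + ∑ t ∈ Finset.Icc 1 T, (y t ⬝ᵥ B t ω) := by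
      rw [← Finset.sum_add_distrib]
      refine Finset.sum_congr rfl fun t ht => ?_
      simp only [Finset.mem_Icc] at ht
      rw [hX t ht.1 ht.2 ω, dotProduct_add, dot_sum_right]
    have hE2 : ∑ t ∈ Finset.range T, (y t ⬝ᵥ X t ω)
        = (∑ t ∈ Finset.range T, ∑ s ∈ Finset.Icc 1 (T - t),
            (y (t + s) ⬝ᵥ (A (t + s) s).mulVec (X t ω)))
          + ∑ t ∈ Finset.range T, (u t ⬝ᵥ (C t).mulVec (X t ω)) := by
      rw [← Finset.sum_add_distrib]
      refine Finset.sum_congr rfl fun t ht => ?_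
      rw [Finset.mem_range] at ht
      rw [hyrec t ht, add_dotProduct, sum_dot_left, transpose_mulVec_dot]
      refine congrArg (· + _) (Finset.sum_congr rfl fun s _ => ?_)
      rw [transpose_mulVec_dot]
    have htel : y T ⬝ᵥ X T ω
        = y 0 ⬝ᵥ X 0 ω + ∑ t ∈ Finset.Icc 1 T, (y t ⬝ᵥ B t ω)
          - ∑ t ∈ Finset.range T, (u t ⬝ᵥ (C t).mulVec (X t ω)) := by
      have h1 : ∑ t ∈ Finset.range (T + 1), (y t ⬝ᵥ X t ω)
          = (∑ t ∈ Finset.Icc 1 T, (y t ⬝ᵥ X t ω)) + y 0 ⬝ᵥ X 0 ω := by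
        rw [Finset.sum_range_succ', sum_Icc_one T (fun t => y t ⬝ᵥ X t ω)]
      have h2 : ∑ t ∈ Finset.range (T + 1), (y t ⬝ᵥ X t ω)
          = (∑ t ∈ Finset.range T, (y t ⬝ᵥ X t ω)) + y T ⬝ᵥ X T ω :=
        Finset.sum_range_succ _ _
      have h3 := hE1
      rw [hdouble] at h3
      have h4 := hE2
      linarith
    have hsum : ∑ i : Fin (T + 1) ⊕ Fin T, ξ i ω
        = (y 0 ⬝ᵥ (X 0 ω - μ0)) + ∑ t ∈ Finset.range T, (y (t + 1) ⬝ᵥ B (t + 1) ω)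
          + ∑ t ∈ Finset.range T, (u t ⬝ᵥ W t ω) := by
      rw [Fintype.sum_sum_type, Fin.sum_univ_succ]
      have e0 : ξ (Sum.inl (0 : Fin (T + 1))) ω = y 0 ⬝ᵥ (X 0 ω - μ0) := by
        simp [hξdef, dualXi]
      have e1 : ∀ j : Fin T, ξ (Sum.inl j.succ) ω = y (j.val + 1) ⬝ᵥ B (j.val + 1) ω := by
        intro j
        simp [hξdef, dualXi]
      have e2 : ∀ t : Fin T, ξ (Sum.inr t) ω = u t.val ⬝ᵥ W t.val ω := by
        intro t
        simp [hξdef, dualXi]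
      rw [e0]
      congr 1
      congr 1
      · rw [Finset.sum_congr rfl fun j _ => e1 j]
        exact Fin.sum_univ_eq_sum_range (fun t => y (t + 1) ⬝ᵥ B (t + 1) ω) T
      · rw [Finset.sum_congr rfl fun t _ => e2 t]
        exact Fin.sum_univ_eq_sum_range (fun t => u t ⬝ᵥ W t ω) T
    have hZ' : ∑ t ∈ Finset.range T, (u t ⬝ᵥ Z t ω)
        = ∑ t ∈ Finset.range T, (u t ⬝ᵥ (C t).mulVec (X t ω))
          + ∑ t ∈ Finset.range T, (u t ⬝ᵥ W t ω) := by
      rw [← Finset.sum_add_distrib]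
      refine Finset.sum_congr rfl fun t ht => ?_
      rw [Finset.mem_range] at ht
      rw [hZ t ht ω, dotProduct_add]
    have hBshift : ∑ t ∈ Finset.Icc 1 T, (y t ⬝ᵥ B t ω)
        = ∑ t ∈ Finset.range T, (y (t + 1) ⬝ᵥ B (t + 1) ω) :=
      sum_Icc_one T _
    rw [hsum, ← hBshift, hZ', ← hyT]
    have hd0 : y 0 ⬝ᵥ (X 0 ω - μ0) = y 0 ⬝ᵥ X 0 ω - y 0 ⬝ᵥ μ0 := dotProduct_sub _ _ _
    rw [htel, hd0]
    ring
  -- Step 2: the probabilistic computation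
  have hcomp : ∀ i, ξ i = (dualPhi T d m μ0 y u i) ∘ (noiseFamily T d m (X 0) B W i) := by
    rintro (j | t)
    · funext ω
      by_cases h0 : j.val = 0 <;>
        simp [hξdef, dualXi, dualPhi, noiseFamily, Function.comp, h0]
    · rfl
  have hξmeas : ∀ i, Measurable (ξ i) := by
    intro i
    rw [hcomp i]
    exact (dualPhi_measurable T d m μ0 y u i).comp (hmeas i)
  have hξindep : ∀ i j, i ≠ j → IndepFun (ξ i) (ξ j) μ := by
    intro i j hij
    rw [hcomp i, hcomp j]
    exact (hindep.indepFun hij).comp (dualPhi_measurable T d m μ0 y u i)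
      (dualPhi_measurable T d m μ0 y u j)
  have hξL2 : ∀ i, MemLp (ξ i) 2 μ := by
    rintro (j | t)
    · by_cases h0 : j.val = 0
      · have e : ξ (Sum.inl j) = fun ω => y 0 ⬝ᵥ (X 0 ω - μ0) := by
          funext ω; simp [hξdef, dualXi, h0]
        rw [e]
        exact memL2_dot (y 0) (fun k => (hX0L2 k).sub (memLp_const _))
      · have h1 : 1 ≤ j.val := Nat.one_le_iff_ne_zero.mpr h0
        have h2 : j.val ≤ T := Nat.lt_succ_iff.mp j.isLt
        have e : ξ (Sum.inl j) = fun ω => y j.val ⬝ᵥ B j.val ω := by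
          funext ω; simp [hξdef, dualXi, h0]
        rw [e]
        exact memL2_dot (y j.val) (fun k => hBL2 j.val h1 h2 k)
    · have e : ξ (Sum.inr t) = fun ω => u t.val ⬝ᵥ W t.val ω := by
        funext ω; simp [hξdef, dualXi]
      rw [e]
      exact memL2_dot (u t.val) (fun k => hWL2 t.val t.isLt k)
  have hξmean : ∀ i, (∫ ω, ξ i ω ∂μ) = 0 := by
    rintro (j | t)
    · by_cases h0 : j.val = 0
      · have e : ξ (Sum.inl j) = fun ω => y 0 ⬝ᵥ (X 0 ω - μ0) := by
          funext ω; simp [hξdef, dualXi, h0]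
        rw [e]
        exact dot_integral_zero μ (y 0) (fun k ω => X 0 ω k - μ0 k)
          (fun k => (hX0L2 k).sub (memLp_const _))
          (fun k => by
            rw [integral_sub ((hX0L2 k).integrable one_le_two) (integrable_const _)]
            simp [hX0mean k])
      · have h1 : 1 ≤ j.val := Nat.one_le_iff_ne_zero.mpr h0
        have h2 : j.val ≤ T := Nat.lt_succ_iff.mp j.isLt
        have e : ξ (Sum.inl j) = fun ω => y j.val ⬝ᵥ B j.val ω := by
          funext ω; simp [hξdef, dualXi, h0]
        rw [e]
        exact dot_integral_zero μ (y j.val) (fun k ω => B j.val ω k)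
          (fun k => hBL2 j.val h1 h2 k) (fun k => hBmean j.val h1 h2 k)
    · have e : ξ (Sum.inr t) = fun ω => u t.val ⬝ᵥ W t.val ω := by
        funext ω; simp [hξdef, dualXi]
      rw [e]
      exact dot_integral_zero μ (u t.val) (fun k ω => W t.val ω k)
        (fun k => hWL2 t.val t.isLt k) (fun k => hWmean t.val t.isLt k)
  have hprod_int : ∀ i j : Fin (T + 1) ⊕ Fin T, Integrable (fun ω => ξ i ω * ξ j ω) μ :=
    fun i j => l2_mul_integrable (hξL2 i) (hξL2 j)
  have hcross : ∀ i j : Fin (T + 1) ⊕ Fin T, i ≠ j → (∫ ω, ξ i ω * ξ j ω ∂μ) = 0 := by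
    intro i j hij
    rw [IndepFun.integral_fun_mul_eq_mul_integral (hξindep i j hij) (hξmeas i).aestronglyMeasurable
      (hξmeas j).aestronglyMeasurable, hξmean i, hξmean j, mul_zero]
  have hdiag0 : (∫ ω, ξ (Sum.inl (0 : Fin (T + 1))) ω * ξ (Sum.inl (0 : Fin (T + 1))) ω ∂μ)
      = y 0 ⬝ᵥ Sig0.mulVec (y 0) := by
    have e : ξ (Sum.inl (0 : Fin (T + 1))) = fun ω => y 0 ⬝ᵥ (X 0 ω - μ0) := by
      funext ω; simp [hξdef, dualXi]
    rw [e]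
    exact quad_integral μ (y 0) (fun k ω => X 0 ω k - μ0 k)
      (fun k => (hX0L2 k).sub (memLp_const _)) Sig0 hX0cov
  have hdiagB : ∀ j : Fin T,
      (∫ ω, ξ (Sum.inl j.succ) ω * ξ (Sum.inl j.succ) ω ∂μ)
      = y (j.val + 1) ⬝ᵥ (Q (j.val + 1)).mulVec (y (j.val + 1)) := by
    intro j
    have e : ξ (Sum.inl j.succ) = fun ω => y (j.val + 1) ⬝ᵥ B (j.val + 1) ω := by
      funext ω; simp [hξdef, dualXi]
    rw [e]
    have h1 : 1 ≤ j.val + 1 := Nat.le_add_left 1 j.val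
    have h2 : j.val + 1 ≤ T := j.isLt
    exact quad_integral μ (y (j.val + 1)) (fun k ω => B (j.val + 1) ω k)
      (fun k => hBL2 _ h1 h2 k) (Q (j.val + 1)) (hBcov _ h1 h2)
  have hdiagW : ∀ t : Fin T,
      (∫ ω, ξ (Sum.inr t) ω * ξ (Sum.inr t) ω ∂μ)
      = u t.val ⬝ᵥ (R t.val).mulVec (u t.val) := by
    intro t
    have e : ξ (Sum.inr t) = fun ω => u t.val ⬝ᵥ W t.val ω := by
      funext ω; simp [hξdef, dualXi]
    rw [e]
    exact quad_integral μ (u t.val) (fun k ω => W t.val ω k)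
      (fun k => hWL2 t.val t.isLt k) (R t.val) (hWcov t.val t.isLt)
  have hdiagsum : ∑ i : Fin (T + 1) ⊕ Fin T, (∫ ω, ξ i ω * ξ i ω ∂μ)
      = y 0 ⬝ᵥ Sig0.mulVec (y 0)
        + ∑ t ∈ Finset.range T, (y (t + 1) ⬝ᵥ (Q (t + 1)).mulVec (y (t + 1)))
        + ∑ t ∈ Finset.range T, (u t ⬝ᵥ (R t).mulVec (u t)) := by
    rw [Fintype.sum_sum_type, Fin.sum_univ_succ, hdiag0]
    congr 1
    congr 1
    · rw [Finset.sum_congr rfl fun j _ => hdiagB j]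
      exact Fin.sum_univ_eq_sum_range
        (fun t => y (t + 1) ⬝ᵥ (Q (t + 1)).mulVec (y (t + 1))) T
    · rw [Finset.sum_congr rfl fun t _ => hdiagW t]
      exact Fin.sum_univ_eq_sum_range (fun t => u t ⬝ᵥ (R t).mulVec (u t)) T
  have hGint : (∫ ω, (∑ i : Fin (T + 1) ⊕ Fin T, ξ i ω) ^ 2 ∂μ)
      = ∑ i : Fin (T + 1) ⊕ Fin T, (∫ ω, ξ i ω * ξ i ω ∂μ) := by
    have hsq : ∀ ω, (∑ i : Fin (T + 1) ⊕ Fin T, ξ i ω) ^ 2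
        = ∑ i : Fin (T + 1) ⊕ Fin T, ∑ j : Fin (T + 1) ⊕ Fin T, ξ i ω * ξ j ω := by
      intro ω; rw [sq, Finset.sum_mul_sum]
    simp_rw [hsq]
    rw [integral_finset_sum _ (fun i _ => integrable_finset_sum _ (fun j _ => hprod_int i j))]
    rw [Finset.sum_congr rfl (fun i _ => integral_finset_sum _ (fun j _ => hprod_int i j))]
    refine Finset.sum_congr rfl fun i _ => ?_
    rw [Finset.sum_eq_single_of_mem i (Finset.mem_univ i)
      (fun j _ hji => hcross i j (fun h => hji h.symm))]
  have hintegrand : (fun ω => (1 / 2 : ℝ) * (f ⬝ᵥ X T ω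
        - (y 0 ⬝ᵥ μ0 - ∑ t ∈ Finset.range T, u t ⬝ᵥ Z t ω)) ^ 2)
      = fun ω => (1 / 2 : ℝ) * (∑ i : Fin (T + 1) ⊕ Fin T, ξ i ω) ^ 2 := by
    funext ω; rw [key ω]
  rw [hintegrand, integral_const_mul, hGint, hdiagsum]
  unfold dualCost
  rw [sum_Icc_one T (fun t => (1 / 2 : ℝ) * (y t ⬝ᵥ (Q t).mulVec (y t))),
    mul_add, mul_add, Finset.mul_sum, Finset.mul_sum]
end

section
/- Adjoint (first-variation) identity: let u ∈ 𝒰 be a control with dual-state solution y for terminal condition f, and let p_0, …, p_T be the associated momentum, i.e. p_0 = Σ_0 y_0 and p_t = Σ_{s=1}^{t} A_{t,s} p_{t-s} + Q_t y_t for 1 ≤ t ≤ T. Then for every perturbation Δu ∈ 𝒰 with dual-state solution Δy for terminal condition 0, y_0^⊤ Σ_0 (Δy_0) + Σ_{t=1}^{T} y_t^⊤ Q_t (Δy_t) = Σ_{t=0}^{T-1} (C_t p_t)^⊤ (Δu_t); consequently I_T(u, Δu) = Σ_{t=0}^{T-1} ( C_t p_t + R_t u_t )^⊤ (Δu_t).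 -/
open Matrix Finset

lemma dot_trans {d m : ℕ} (C : Matrix (Fin m) (Fin d) ℝ) (p : Fin d → ℝ) (w : Fin m → ℝ) :
    p ⬝ᵥ (Cᵀ).mulVec w = C.mulVec p ⬝ᵥ w := by
  rw [Matrix.dotProduct_mulVec, Matrix.vecMul_transpose]

lemma dot_symm {d : ℕ} (M : Matrix (Fin d) (Fin d) ℝ) (hM : M.IsSymm)
    (v w : Fin d → ℝ) : v ⬝ᵥ M.mulVec w = M.mulVec v ⬝ᵥ w := by
  conv_lhs => rw [← hM]
  exact dot_trans M v w

lemma sum_dotProduct' {n : ℕ} {ι : Type*} (s : Finset ι) (f : ι → Fin n → ℝ) (w : Fin n → ℝ) :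
    (∑ i ∈ s, f i) ⬝ᵥ w = ∑ i ∈ s, f i ⬝ᵥ w := by
  classical
  induction s using Finset.induction with
  | empty => simp [zero_dotProduct]
  | insert _ _ h ih => simp [Finset.sum_insert h, add_dotProduct, ih]

lemma dotProduct_sum' {n : ℕ} {ι : Type*} (s : Finset ι) (v : Fin n → ℝ) (f : ι → Fin n → ℝ) :
    v ⬝ᵥ (∑ i ∈ s, f i) = ∑ i ∈ s, v ⬝ᵥ f i := by
  classical
  induction s using Finset.induction with
  | empty => simp [dotProduct_zero]
  | insert _ _ h ih => simp [Finset.sum_insert h, dotProduct_add, ih]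

/-- Adjoint (first-variation) identity: let `u ∈ 𝒰` be a control with dual-state
solution `y` for terminal condition `f`, and let `p_0, …, p_T` be the associated
momentum, i.e. `p_0 = Σ0 y_0` and `p_t = ∑_{s=1}^{t} A_{t,s} p_{t-s} + Q_t y_t` for
`1 ≤ t ≤ T`. Then for every perturbation `Δu ∈ 𝒰` with dual-state solution `Δy` for
terminal condition `0`,
`y_0ᵀ Σ0 (Δy_0) + ∑_{t=1}^{T} y_tᵀ Q_t (Δy_t) = ∑_{t=0}^{T-1} (C_t p_t)ᵀ (Δu_t)`;
consequently `I_T(u, Δu) = ∑_{t=0}^{T-1} (C_t p_t + R_t u_t)ᵀ (Δu_t)`. -/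
theorem adjoint_first_variation_identity
    (T d m : ℕ) (hT : 1 ≤ T) (hd : 1 ≤ d) (hm : 1 ≤ m)
    (A : ℕ → ℕ → Matrix (Fin d) (Fin d) ℝ)
    (C : ℕ → Matrix (Fin m) (Fin d) ℝ)
    (Sig0 : Matrix (Fin d) (Fin d) ℝ)
    (Q : ℕ → Matrix (Fin d) (Fin d) ℝ) (R : ℕ → Matrix (Fin m) (Fin m) ℝ)
    (hSig0 : Sig0.IsSymm) (hQ : ∀ t, 1 ≤ t → t ≤ T → (Q t).IsSymm)
    (hR : ∀ t < T, (R t).IsSymm)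
    (u : ℕ → Fin m → ℝ) (f : Fin d → ℝ) (y : ℕ → Fin d → ℝ)
    (hy : IsDualSol T d m A C u f y)
    -- the associated momentum process
    (p : ℕ → Fin d → ℝ)
    (hp0 : p 0 = Sig0.mulVec (y 0))
    (hp : ∀ t, 1 ≤ t → t ≤ T →
      p t = (∑ s ∈ Finset.Icc 1 t, (A t s).mulVec (p (t - s))) + (Q t).mulVec (y t)) :
    ∀ (Δu : ℕ → Fin m → ℝ) (Δy : ℕ → Fin d → ℝ),
      IsDualSol T d m A C Δu 0 Δy →
      ((y 0 ⬝ᵥ Sig0.mulVec (Δy 0)) + (∑ t ∈ Finset.Icc 1 T, y t ⬝ᵥ (Q t).mulVec (Δy t))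
          = ∑ t ∈ Finset.range T, (C t).mulVec (p t) ⬝ᵥ Δu t)
        ∧ ((y 0 ⬝ᵥ Sig0.mulVec (Δy 0))
            + (∑ t ∈ Finset.Icc 1 T, y t ⬝ᵥ (Q t).mulVec (Δy t))
            + (∑ t ∈ Finset.range T, u t ⬝ᵥ (R t).mulVec (Δu t))
          = ∑ t ∈ Finset.range T, ((C t).mulVec (p t) + (R t).mulVec (u t)) ⬝ᵥ Δu t) := by
  obtain ⟨hyT, hyrec⟩ := hy
  intro Δu Δy hΔ
  obtain ⟨hΔT, hΔrec⟩ := hΔ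
  have key : (y 0 ⬝ᵥ Sig0.mulVec (Δy 0)) + (∑ t ∈ Finset.Icc 1 T, y t ⬝ᵥ (Q t).mulVec (Δy t))
      = ∑ t ∈ Finset.range T, (C t).mulVec (p t) ⬝ᵥ Δu t := by
    have h1 : y 0 ⬝ᵥ Sig0.mulVec (Δy 0) = p 0 ⬝ᵥ Δy 0 := by
      rw [dot_symm Sig0 hSig0, hp0]
    have h2 : ∀ t ∈ Finset.Icc 1 T, y t ⬝ᵥ (Q t).mulVec (Δy t)
        = p t ⬝ᵥ Δy t
          - ∑ s ∈ Finset.Icc 1 t, (A t s).mulVec (p (t - s)) ⬝ᵥ Δy t := by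
      intro t ht
      simp only [Finset.mem_Icc] at ht
      rw [dot_symm (Q t) (hQ t ht.1 ht.2), eq_sub_iff_add_eq, ← sum_dotProduct',
        ← add_dotProduct, add_comm, ← hp t ht.1 ht.2]
    have h3 : p 0 ⬝ᵥ Δy 0 + ∑ t ∈ Finset.Icc 1 T, p t ⬝ᵥ Δy t
        = ∑ t ∈ Finset.range T, p t ⬝ᵥ Δy t := by
      have hins : Finset.range (T + 1) = insert 0 (Finset.Icc 1 T) := by
        ext x; simp [Nat.lt_succ_iff]; omega
      have h' : ∑ t ∈ Finset.range (T + 1), p t ⬝ᵥ Δy t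
          = p 0 ⬝ᵥ Δy 0 + ∑ t ∈ Finset.Icc 1 T, p t ⬝ᵥ Δy t := by
        rw [hins, Finset.sum_insert (by simp)]
      rw [← h', Finset.sum_range_succ, hΔT]
      simp
    have h4 : ∀ t ∈ Finset.range T, p t ⬝ᵥ Δy t
        = (∑ s ∈ Finset.Icc 1 (T - t), (A (t + s) s).mulVec (p t) ⬝ᵥ Δy (t + s))
          + (C t).mulVec (p t) ⬝ᵥ Δu t := by
      intro t ht
      simp only [Finset.mem_range] at ht
      rw [hΔrec t ht, dotProduct_add, dotProduct_sum']
      congr 1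
      · exact Finset.sum_congr rfl fun s _ => dot_trans _ _ _
      · exact dot_trans _ _ _
    have h5 : ∑ t ∈ Finset.range T, ∑ s ∈ Finset.Icc 1 (T - t),
          (A (t + s) s).mulVec (p t) ⬝ᵥ Δy (t + s)
        = ∑ t ∈ Finset.Icc 1 T, ∑ s ∈ Finset.Icc 1 t,
          (A t s).mulVec (p (t - s)) ⬝ᵥ Δy t := by
      rw [Finset.sum_sigma', Finset.sum_sigma']
      refine Finset.sum_nbij' (fun x => ⟨x.1 + x.2, x.2⟩) (fun x => ⟨x.1 - x.2, x.2⟩)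
        ?_ ?_ ?_ ?_ ?_
      · rintro ⟨t, s⟩ h
        simp only [Finset.mem_sigma, Finset.mem_range, Finset.mem_Icc] at h ⊢
        omega
      · rintro ⟨t, s⟩ h
        simp only [Finset.mem_sigma, Finset.mem_range, Finset.mem_Icc] at h ⊢
        omega
      · rintro ⟨t, s⟩ h
        simp only [Finset.mem_sigma, Finset.mem_range, Finset.mem_Icc] at h
        have h' : t + s - s = t := by omega
        simp [h']
      · rintro ⟨t, s⟩ h
        simp only [Finset.mem_sigma, Finset.mem_range, Finset.mem_Icc] at h
        have h' : t - s + s = t := by omega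
        simp [h']
      · rintro ⟨t, s⟩ h
        simp only [Finset.mem_sigma, Finset.mem_range, Finset.mem_Icc] at h
        have h' : t + s - s = t := by omega
        simp [h']
    rw [h1, Finset.sum_congr rfl h2, Finset.sum_sub_distrib, ← add_sub_assoc, h3,
      Finset.sum_congr rfl h4, Finset.sum_add_distrib, h5]
    ring
  refine ⟨key, ?_⟩
  rw [key,
    Finset.sum_congr rfl
      (fun t ht => dot_symm (R t) (hR t (Finset.mem_range.mp ht)) (u t) (Δu t)),
    ← Finset.sum_add_distrib]
  exact Finset.sum_congr rfl fun t _ => (add_dotProduct _ _ _).symm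
end
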